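/- Let G be an abelian group and Γ ≤ G a subgroup of finite index. Let (X,G) be a minimal dynamical system on a compact metric space. If (X,Γ) is not minimal, then X decomposes as a finite disjoint union X = g_1 W ⊔ … ⊔ g_r W with r ≥ 2, where W is a Γ-minimal subset and g_i ∈ G; in particular (X,Γ) admits a non-minimal finite (hence equicontinuous) factor. -/

import Mathlib

open Pointwise
/-- if `G` is abelian, `Γ ≤ G` has finite index, `(X,G)` is
minimal but `(X,Γ)` is not minimal, then `X` decomposes as a disjoint union
`X = g₁W ⊔ … ⊔ g_rW` with `r ≥ 2`, where `W` is a `Γ`-minimal subset. -/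
theorem stmt_12 {G : Type*} [CommGroup G] {X : Type*} [MetricSpace X]
    [CompactSpace X] [MulAction G X]
    (hcont : ∀ g : G, Continuous fun x : X => g • x)
    (Γ : Subgroup G) (hΓ : Γ.FiniteIndex)
    (hminG : ∀ x : X, Dense (MulAction.orbit G x))
    (hnotmin : ¬ ∀ x : X, Dense {y : X | ∃ g ∈ Γ, y = g • x}) :
    ∃ r : ℕ, 2 ≤ r ∧ ∃ (W : Set X) (g : Fin r → G),
      (W.Nonempty ∧ IsClosed W ∧ (∀ γ ∈ Γ, ∀ x ∈ W, γ • x ∈ W) ∧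
        ∀ W' ⊆ W, W'.Nonempty → IsClosed W' →
          (∀ γ ∈ Γ, ∀ x ∈ W', γ • x ∈ W') → W' = W) ∧
      (∀ i j : Fin r, i ≠ j → Disjoint (g i • W) (g j • W)) ∧
      (⋃ i : Fin r, g i • W) = Set.univ := by
  classical
  haveI := hΓ
  haveI : Nonempty X := by
    rcases isEmpty_or_nonempty X with h | h
    · exact absurd (fun x => (h.false x).elim) hnotmin
    · exact h
  -- the collection of nonempty closed Γ-invariant sets
  set S : Set (Set X) :=
    {A | A.Nonempty ∧ IsClosed A ∧ ∀ γ ∈ Γ, ∀ x ∈ A, γ • x ∈ A} with hS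
  -- existence of a Γ-minimal set by Zorn's lemma
  have hzorn : ∃ m, m ⊆ Set.univ ∧ Minimal (· ∈ S) m := by
    apply zorn_superset_nonempty S
    · intro c hcS hchain hcne
      refine ⟨⋂₀ c, ⟨?_, ?_, ?_⟩, fun s hs => Set.sInter_subset_of_mem hs⟩
      · haveI : Nonempty c := hcne.to_subtype
        have hdir : DirectedOn (· ⊇ ·) c := by
          intro a ha b hb
          rcases eq_or_ne a b with rfl | hab
          · exact ⟨a, ha, subset_rfl, subset_rfl⟩
          · rcases hchain ha hb hab with h | h
            · exact ⟨a, ha, subset_rfl, h⟩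
            · exact ⟨b, hb, h, subset_rfl⟩
        exact IsCompact.nonempty_sInter_of_directed_nonempty_isCompact_isClosed
          hdir (fun U hU => (hcS hU).1)
          (fun U hU => (hcS hU).2.1.isCompact) (fun U hU => (hcS hU).2.1)
      · exact isClosed_sInter fun U hU => (hcS hU).2.1
      · intro γ hγ x hx U hU
        exact (hcS hU).2.2 γ hγ x (hx U hU)
    · exact ⟨Set.univ_nonempty, isClosed_univ, fun _ _ _ _ => trivial⟩
  obtain ⟨W, -, hWmem, hWmin⟩ := hzorn
  obtain ⟨hWne, hWcl, hWinv⟩ := hWmem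
  -- basic facts about translates g • W
  have himg : ∀ (g : G) (A : Set X), (fun x : X => g • x) '' A = g • A := by
    intro g A; ext x; simp [Set.mem_smul_set]
  have hclosed : ∀ (g : G) (A : Set X), IsClosed A → IsClosed (g • A) := by
    intro g A hA
    rw [← himg]
    exact (hA.isCompact.image (hcont g)).isClosed
  have hinvt : ∀ (g : G) (A : Set X), (∀ γ ∈ Γ, ∀ x ∈ A, γ • x ∈ A) →
      (∀ γ ∈ Γ, ∀ x ∈ g • A, γ • x ∈ g • A) := by
    intro g A hA γ hγ x hx
    obtain ⟨w, hw, rfl⟩ := hx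
    refine ⟨γ • w, hA γ hγ w hw, ?_⟩
    rw [smul_comm]
  have hne : ∀ (g : G) (A : Set X), A.Nonempty → (g • A).Nonempty := by
    intro g A ⟨a, ha⟩; exact ⟨g • a, a, ha, rfl⟩
  have hSmem : ∀ g : G, g • W ∈ S :=
    fun g => ⟨hne g W hWne, hclosed g W hWcl, hinvt g W hWinv⟩
  -- each translate is Γ-minimal
  have hmin : ∀ (g : G) (W' : Set X), W' ⊆ g • W → W' ∈ S → W' = g • W := by
    intro g W' hsub hW'
    have h1 : g⁻¹ • W' ⊆ W := by
      intro x hx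
      obtain ⟨y, hy, rfl⟩ := hx
      obtain ⟨w, hw, rfl⟩ := hsub hy
      simpa using hw
    have h2 : g⁻¹ • W' ∈ S :=
      ⟨hne _ _ hW'.1, hclosed _ _ hW'.2.1, hinvt _ _ hW'.2.2⟩
    have h3 : g⁻¹ • W' = W := h1.antisymm (hWmin h2 h1)
    calc W' = g • (g⁻¹ • W') := (smul_inv_smul g W').symm
    _ = g • W := by rw [h3]
  -- dichotomy: translates are equal or disjoint
  have hdich : ∀ g h : G, (g • W ∩ h • W).Nonempty → g • W = h • W := by
    intro g h hint
    have hmemS : g • W ∩ h • W ∈ S :=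
      ⟨hint, (hclosed g W hWcl).inter (hclosed h W hWcl),
        fun γ hγ x hx => ⟨hinvt g W hWinv γ hγ x hx.1, hinvt h W hWinv γ hγ x hx.2⟩⟩
    exact (hmin g _ Set.inter_subset_left hmemS).symm.trans
      (hmin h _ Set.inter_subset_right hmemS)
  -- γ • W = W for γ ∈ Γ
  have hgamma : ∀ γ ∈ Γ, γ • W = W := by
    intro γ hγ
    have h1 : γ • W ⊆ W := by
      intro x hx; obtain ⟨w, hw, rfl⟩ := hx; exact hWinv γ hγ w hw
    exact h1.antisymm (hWmin (hSmem γ) h1)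
  -- the map on the quotient
  have hwd : ∀ a b : G, QuotientGroup.leftRel Γ a b → a • W = b • W := by
    intro a b hab
    have h : a⁻¹ * b ∈ Γ := QuotientGroup.leftRel_apply.mp hab
    calc a • W = a • ((a⁻¹ * b) • W) := by rw [hgamma _ h]
    _ = b • W := by rw [smul_smul, mul_inv_cancel_left]
  set f : G ⧸ Γ → Set X := Quotient.lift (fun g : G => g • W) hwd with hf
  have hfmk : ∀ g : G, f (QuotientGroup.mk g) = g • W := fun g => rfl
  haveI : Finite (G ⧸ Γ) := Subgroup.finite_quotient_of_finiteIndex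
  haveI : Finite (Set.range f) := Set.finite_range f |>.to_subtype
  haveI : Fintype (Set.range f) := Fintype.ofFinite _
  set T := Set.range f with hT
  -- every element of T is a translate of W
  have hTrep : ∀ t : T, ∃ g : G, g • W = (t : Set X) := by
    rintro ⟨t, ht⟩
    obtain ⟨q, hq⟩ := ht
    obtain ⟨a, rfl⟩ := QuotientGroup.mk_surjective q
    exact ⟨a, hq⟩
  -- W itself is in T
  have hWT : W ∈ T := ⟨QuotientGroup.mk (1 : G), by rw [hfmk, one_smul]⟩
  -- T is nontrivial
  have hnontriv : ∃ g : G, g • W ≠ W := by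
    by_contra hall
    push_neg at hall
    -- then W is G-invariant, hence W = univ
    obtain ⟨w₀, hw₀⟩ := hWne
    have horb : MulAction.orbit G w₀ ⊆ W := by
      rintro x ⟨g, rfl⟩
      rw [← hall g]
      exact ⟨w₀, hw₀, rfl⟩
    have hWuniv : W = Set.univ :=
      Set.eq_univ_of_univ_subset (by
        rw [← (hminG w₀).closure_eq]
        exact hWcl.closure_subset_iff.mpr horb)
    -- so (X, Γ) is minimal, contradiction
    apply hnotmin
    intro x
    have hOmem : closure {y : X | ∃ g ∈ Γ, y = g • x} ∈ S := by
      refine ⟨⟨x, subset_closure ⟨1, one_mem Γ, (one_smul G x).symm⟩⟩, isClosed_closure, ?_⟩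
      intro γ hγ y hy
      have h1 : (fun z : X => γ • z) '' closure {y : X | ∃ g ∈ Γ, y = g • x} ⊆
          closure ((fun z : X => γ • z) '' {y : X | ∃ g ∈ Γ, y = g • x}) :=
        image_closure_subset_closure_image (hcont γ)
      have h2 : (fun z : X => γ • z) '' {y : X | ∃ g ∈ Γ, y = g • x} ⊆
          {y : X | ∃ g ∈ Γ, y = g • x} := by
        rintro z ⟨w, ⟨g', hg', rfl⟩, rfl⟩
        exact ⟨γ * g', mul_mem hγ hg', (mul_smul γ g' x).symm⟩
      exact closure_mono h2 (h1 ⟨y, hy, rfl⟩)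
    have hsub : closure {y : X | ∃ g ∈ Γ, y = g • x} ⊆ W := by
      rw [hWuniv]; exact Set.subset_univ _
    have := hWmin hOmem hsub
    rw [dense_iff_closure_eq]
    exact Set.eq_univ_of_univ_subset (hWuniv ▸ this)
  haveI : Nontrivial T := by
    obtain ⟨g, hg⟩ := hnontriv
    refine ⟨⟨⟨g • W, ⟨QuotientGroup.mk g, hfmk g⟩⟩, ⟨W, hWT⟩, ?_⟩⟩
    simp only [ne_eq, Subtype.mk.injEq]
    exact fun h => hg (congrArg Subtype.val h)
  -- set up the enumeration
  set r := Fintype.card T with hr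
  have hr2 : 2 ≤ r := Fintype.one_lt_card
  set e : T ≃ Fin r := (Fintype.equivFin T) with he
  set g : Fin r → G := fun i => Classical.choose (hTrep (e.symm i)) with hg
  have hgspec : ∀ i : Fin r, g i • W = ((e.symm i : T) : Set X) :=
    fun i => Classical.choose_spec (hTrep (e.symm i))
  refine ⟨r, hr2, W, g, ⟨hWne, hWcl, hWinv, ?_⟩, ?_, ?_⟩
  · intro W' hsub hne' hcl' hinv'
    have := hmin 1 W' (by rwa [one_smul]) ⟨hne', hcl', hinv'⟩
    rwa [one_smul] at this
  · intro i j hij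
    rw [Set.disjoint_iff_inter_eq_empty]
    by_contra hcon
    have hint : (g i • W ∩ g j • W).Nonempty := Set.nonempty_iff_ne_empty.mpr hcon
    have heq : g i • W = g j • W := hdich _ _ hint
    apply hij
    have : (e.symm i : T) = (e.symm j : T) := by
      apply Subtype.ext
      rw [← hgspec i, ← hgspec j, heq]
    have := congrArg e this
    rwa [e.apply_symm_apply, e.apply_symm_apply] at this
  · apply Set.eq_univ_of_univ_subset
    obtain ⟨w₀, hw₀⟩ := hWne
    have horb : MulAction.orbit G w₀ ⊆ ⋃ i : Fin r, g i • W := by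
      rintro x ⟨a, rfl⟩
      have hmemT : a • W ∈ T := ⟨QuotientGroup.mk a, hfmk a⟩
      refine Set.mem_iUnion.mpr ⟨e ⟨a • W, hmemT⟩, ?_⟩
      rw [hgspec, e.symm_apply_apply]
      exact ⟨w₀, hw₀, rfl⟩
    have hUcl : IsClosed (⋃ i : Fin r, g i • W) :=
      isClosed_iUnion_of_finite fun i => hclosed (g i) W hWcl
    rw [← (hminG w₀).closure_eq]
    exact hUcl.closure_subset_iff.mpr horb
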